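/- Poincaré-type inequality for the graph space: under Assumption 1 there exists C > 0 depending only on Ω and u such that for every I ∈ G(b;Ω), ‖I‖²_{L²(Ω)} ≤ C ( ‖I‖²_{L²(Γ_0)} + ‖I‖²_{L²(Γ_1)} + ‖b·∇_t I‖²_{L²(Ω)} ). -/

import Mathlib

open MeasureTheory Set intervalIntegral Filter
open scoped NNReal ENNReal Topology

set_option maxHeartbeats 1000000


lemma aux_sq_integral_le {α : Type*} [MeasurableSpace α] {μ : Measure α}
    [IsProbabilityMeasure μ] {f : α → ℝ} (hf : Integrable f μ)
    (hf2 : Integrable (fun a => f a ^ 2) μ) :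
    (∫ a, f a ∂μ) ^ 2 ≤ ∫ a, f a ^ 2 ∂μ := by
  set m := ∫ a, f a ∂μ with hm
  have h0 : 0 ≤ ∫ a, (f a - m) ^ 2 ∂μ := integral_nonneg fun a => sq_nonneg _
  have hexp : ∫ a, (f a - m) ^ 2 ∂μ
      = (∫ a, f a ^ 2 ∂μ) - 2 * m * m + m ^ 2 := by
    have h1 : ∀ a, (f a - m) ^ 2 = f a ^ 2 - (2 * m) * f a + m ^ 2 := fun a => by ring
    simp_rw [h1]
    have ha : Integrable (fun a => f a ^ 2 - 2 * m * f a) μ := hf2.sub (hf.const_mul (2 * m))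
    rw [integral_add ha (integrable_const _),
      integral_sub hf2 (hf.const_mul (2 * m)), MeasureTheory.integral_const_mul, MeasureTheory.integral_const]
    simp [← hm]
  nlinarith [h0, hexp]

lemma aux_ftc {g g' : ℝ → ℝ} (hderiv : ∀ s ∈ Set.Icc (0:ℝ) 1, HasDerivAt g (g' s) s)
    (hmeas : Measurable g')
    (hint : IntegrableOn (fun s => (g' s) ^ 2) (Set.Icc (0:ℝ) 1) volume)
    {t : ℝ} (ht : t ∈ Set.Icc (0:ℝ) 1) :
    (g t) ^ 2 ≤ 2 * (g 0) ^ 2 + 2 * (∫ s in Set.Icc (0:ℝ) 1, (g' s) ^ 2) ∧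
    (g 0) ^ 2 ≤ 2 * (g t) ^ 2 + 2 * (∫ s in Set.Icc (0:ℝ) 1, (g' s) ^ 2) := by
  haveI : IsProbabilityMeasure (volume.restrict (Set.Icc (0:ℝ) 1)) := by
    constructor
    simp [Measure.restrict_apply_univ, Real.volume_Icc]
  have hconst : IntegrableOn (fun _ : ℝ => (1:ℝ)) (Set.Icc (0:ℝ) 1) volume :=
    integrableOn_const (by simp [Real.volume_Icc]) (by simp)
  have h2 : IntegrableOn (fun s => (1 + (g' s) ^ 2) / 2) (Set.Icc (0:ℝ) 1) volume :=
    (hconst.add hint).div_const 2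
  have habs : IntegrableOn (fun s => |g' s|) (Set.Icc (0:ℝ) 1) volume :=
    h2.mono' hmeas.abs.aestronglyMeasurable.restrict (by
      filter_upwards with s
      rw [Real.norm_eq_abs, abs_abs]
      nlinarith [sq_nonneg (|g' s| - 1), sq_abs (g' s)])
  set R := ∫ s in Set.Icc (0:ℝ) 1, (g' s) ^ 2 with hR
  set S := ∫ s in Set.Icc (0:ℝ) 1, |g' s| with hSdef
  have hS2 : S ^ 2 ≤ R := by
    have := aux_sq_integral_le (μ := volume.restrict (Set.Icc (0:ℝ) 1))
      (f := fun s => |g' s|) habs (by simp only [sq_abs]; exact hint)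
    simpa [sq_abs, ← hR, ← hSdef] using this
  have hSnn : 0 ≤ S := integral_nonneg fun s => abs_nonneg _
  have hg'int : IntegrableOn g' (Set.Icc (0:ℝ) 1) volume :=
    habs.mono' hmeas.aestronglyMeasurable.restrict
      (by filter_upwards with s using by rw [Real.norm_eq_abs])
  have hii : IntervalIntegrable g' volume 0 t :=
    (intervalIntegrable_iff_integrableOn_Icc_of_le ht.1).2
      (hg'int.mono_set (Icc_subset_Icc le_rfl ht.2))
  have hftc : ∫ s in (0:ℝ)..t, g' s = g t - g 0 := by
    refine integral_eq_sub_of_hasDerivAt (fun s hs => hderiv s ?_) hii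
    rw [uIcc_of_le ht.1] at hs
    exact Icc_subset_Icc le_rfl ht.2 hs
  have hkey : |g t - g 0| ≤ S := by
    rw [← hftc]
    calc |∫ s in (0:ℝ)..t, g' s| ≤ ∫ s in (0:ℝ)..t, |g' s| :=
          abs_integral_le_integral_abs ht.1
      _ = ∫ s in Set.Ioc (0:ℝ) t, |g' s| := integral_of_le ht.1
      _ ≤ S := by
          refine setIntegral_mono_set habs ?_ ?_
          · filter_upwards with s using abs_nonneg _
          · exact ((Set.Ioc_subset_Icc_self).trans (Icc_subset_Icc le_rfl ht.2)).eventuallyLE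
  have h1 : (g t - g 0) ^ 2 ≤ S ^ 2 := sq_le_sq' (by linarith [(abs_le.1 hkey).1]) (abs_le.1 hkey).2
  constructor <;> nlinarith [h1, hS2, sq_nonneg (2 * g 0 - g t), sq_nonneg (2 * g t - g 0)]

section
variable {E : Type*} [NormedAddCommGroup E] [NormedSpace ℝ E] {u : ℝ × E → E} {K : ℝ≥0}
  {φ : ℝ → E → E}

lemma aux_lip_forward (hu : ∀ t, LipschitzWith K fun x => u (t, x))
    (hflow : ∀ x t, HasDerivAt (fun s => φ s x) (u (t, φ t x)) t)
    (hφ0 : ∀ x, φ 0 x = x)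
    {t : ℝ} (ht : t ∈ Set.Icc (0:ℝ) 1) (x x' : E) :
    dist (φ t x) (φ t x') ≤ Real.exp K * dist x x' := by
  have hcont : ∀ y, Continuous (fun s => φ s y) := fun y =>
    continuous_iff_continuousAt.2 fun s => (hflow y s).continuousAt
  have h := dist_le_of_trajectories_ODE (v := fun s y => u (s, y)) hu
    ((hcont x).continuousOn) (fun s _ => (hflow x s).hasDerivWithinAt)
    ((hcont x').continuousOn) (fun s _ => (hflow x' s).hasDerivWithinAt)
    (le_refl (dist (φ (0:ℝ) x) (φ (0:ℝ) x'))) t ht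
  simp only [hφ0, sub_zero] at h
  calc dist (φ t x) (φ t x') ≤ dist x x' * Real.exp (K * t) := h
    _ ≤ dist x x' * Real.exp K := by
        refine mul_le_mul_of_nonneg_left ?_ dist_nonneg
        exact Real.exp_le_exp.2 (by nlinarith [ht.1, ht.2, K.coe_nonneg])
    _ = Real.exp K * dist x x' := mul_comm _ _

lemma aux_lip_backward (hu : ∀ t, LipschitzWith K fun x => u (t, x))
    (hflow : ∀ x t, HasDerivAt (fun s => φ s x) (u (t, φ t x)) t)
    (hφ0 : ∀ x, φ 0 x = x)
    {t : ℝ} (ht : t ∈ Set.Icc (0:ℝ) 1) (x x' : E) :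
    dist x x' ≤ Real.exp K * dist (φ t x) (φ t x') := by
  have hcont : ∀ y, Continuous (fun s => φ (t - s) y) := fun y =>
    (continuous_iff_continuousAt.2 fun s => (hflow y s).continuousAt).comp
      (continuous_const.sub continuous_id)
  have hv : ∀ s, LipschitzWith K (fun y => -u (t - s, y)) := fun s =>
    LipschitzWith.of_dist_le_mul fun a b => by
      rw [dist_neg_neg]; exact (hu (t - s)).dist_le_mul a b
  have hderiv : ∀ y, ∀ s ∈ Set.Ico (0:ℝ) t,
      HasDerivWithinAt (fun s' => φ (t - s') y) (-u (t - s, φ (t - s) y)) (Set.Ici s) s := by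
    intro y s _
    have h1 : HasDerivAt (fun r => φ r y) (u (t - s, φ (t - s) y)) (t - s) := hflow y (t - s)
    have h2 : HasDerivAt (fun s' : ℝ => t - s') (-1 : ℝ) s := by
      simpa using (hasDerivAt_id s).const_sub t
    have h3 := h1.scomp s h2
    simp only [neg_one_smul] at h3
    exact h3.hasDerivWithinAt
  have h := dist_le_of_trajectories_ODE (v := fun s y => -u (t - s, y)) hv
    ((hcont x).continuousOn) (hderiv x)
    ((hcont x').continuousOn) (hderiv x')
    (le_refl (dist (φ (t - 0) x) (φ (t - 0) x'))) t ⟨ht.1, le_refl t⟩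
  simp only [sub_self, sub_zero, hφ0] at h
  calc dist x x' ≤ dist (φ t x) (φ t x') * Real.exp (K * t) := h
    _ ≤ dist (φ t x) (φ t x') * Real.exp K := by
        refine mul_le_mul_of_nonneg_left ?_ dist_nonneg
        exact Real.exp_le_exp.2 (by nlinarith [ht.1, ht.2, K.coe_nonneg])
    _ = Real.exp K * dist (φ t x) (φ t x') := mul_comm _ _

end


lemma aux_ofReal_le {a b r : ℝ} (hb : 0 ≤ b) (hr : 0 ≤ r) (h : a ≤ 2 * b + 2 * r) :
    ENNReal.ofReal a ≤ 2 * ENNReal.ofReal b + 2 * ENNReal.ofReal r := by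
  calc ENNReal.ofReal a ≤ ENNReal.ofReal (2 * b + 2 * r) := ENNReal.ofReal_le_ofReal h
    _ = ENNReal.ofReal (2 * b) + ENNReal.ofReal (2 * r) :=
        ENNReal.ofReal_add (by positivity) (by positivity)
    _ = 2 * ENNReal.ofReal b + 2 * ENNReal.ofReal r := by
        rw [ENNReal.ofReal_mul (by norm_num), ENNReal.ofReal_mul (by norm_num)]
        norm_num

lemma aux_transfer' {d : ℕ} {ω : Set ((Fin d) → ℝ)} (hω : MeasurableSet ω) {L : ℝ≥0}
    {χ σ : ((Fin d) → ℝ) → ((Fin d) → ℝ)} (hχ : Measurable χ) (hσ : LipschitzWith L σ)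
    (hmaps : Set.MapsTo χ ω ω) (hinv : ∀ z, σ (χ z) = z)
    {H : ((Fin d) → ℝ) → ℝ≥0∞} (hH : Measurable H) :
    ∫⁻ z in ω, H (χ z) ∂volume ≤ (L : ℝ≥0∞) ^ (d : ℝ) * ∫⁻ z in ω, H z ∂volume := by
  have hμH : (μH[(d : ℝ)] : Measure ((Fin d) → ℝ)) = volume := by
    have := hausdorffMeasure_pi_real (ι := Fin d)
    simpa [Fintype.card_fin] using this
  have hle : (volume.restrict ω).map χ ≤ ((L : ℝ≥0∞) ^ (d : ℝ)) • volume.restrict ω := by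
    rw [Measure.le_iff]
    intro Aset hA
    rw [Measure.map_apply hχ hA, Measure.restrict_apply (hχ hA), Measure.smul_apply,
      Measure.restrict_apply hA, smul_eq_mul]
    have hsub : χ ⁻¹' Aset ∩ ω ⊆ σ '' (Aset ∩ ω) := by
      rintro z ⟨hzA, hzω⟩
      exact ⟨χ z, ⟨hzA, hmaps hzω⟩, hinv z⟩
    calc volume (χ ⁻¹' Aset ∩ ω) ≤ volume (σ '' (Aset ∩ ω)) := measure_mono hsub
      _ ≤ (L : ℝ≥0∞) ^ (d : ℝ) * volume (Aset ∩ ω) := by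
          rw [← hμH]
          exact hσ.hausdorffMeasure_image_le (by positivity) _
  calc ∫⁻ z in ω, H (χ z) ∂volume = ∫⁻ y, H y ∂((volume.restrict ω).map χ) :=
        (lintegral_map hH hχ).symm
    _ ≤ ∫⁻ y, H y ∂(((L : ℝ≥0∞) ^ (d : ℝ)) • volume.restrict ω) := lintegral_mono' hle le_rfl
    _ = (L : ℝ≥0∞) ^ (d : ℝ) * ∫⁻ z in ω, H z ∂volume := lintegral_smul_measure _ _

open MeasureTheory

/-- Poincaré-type inequality, Theorem 3: under Assumption 1 there exists
`C > 0` depending only on `Ω = [0,1] × ω` and `u` such that every `I` in the graph space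
of the material derivative `b·∇_t I = ∂_t I + u·∇I` satisfies
`‖I‖²_{L²(Ω)} ≤ C (‖I‖²_{L²(Γ_0)} + ‖I‖²_{L²(Γ_1)} + ‖b·∇_t I‖²_{L²(Ω)})`. -/
theorem poincare_inequality_graph_space
    {d : ℕ} (ω : Set ((Fin d) → ℝ)) (hω : MeasurableSet ω)
    (u : ℝ × ((Fin d) → ℝ) → ((Fin d) → ℝ)) (K : NNReal)
    (hu_lip : ∀ t, LipschitzWith K (fun x => u (t, x)))
    (hu_cont : Continuous u)
    (φ ψ : ℝ → ((Fin d) → ℝ) → ((Fin d) → ℝ))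
    (hφ0 : ∀ xh, φ 0 xh = xh)
    (hflow : ∀ xh t, HasDerivAt (fun s => φ s xh) (u (t, φ t xh)) t)
    (hbij : ∀ t ∈ Set.Icc (0:ℝ) 1, Set.BijOn (φ t) ω ω ∧
              Function.LeftInverse (ψ t) (φ t) ∧ Function.RightInverse (ψ t) (φ t))
    (Cu : ℝ)
    (hCu : ∀ t ∈ Set.Icc (0:ℝ) 1, ∀ x ∈ ω,
        |LinearMap.det ((fderiv ℝ (ψ t) x :
            ((Fin d) → ℝ) →L[ℝ] ((Fin d) → ℝ)) :
            ((Fin d) → ℝ) →ₗ[ℝ] ((Fin d) → ℝ))| ≤ Cu) :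
    ∃ C > 0, ∀ I : ℝ × ((Fin d) → ℝ) → ℝ,
      Differentiable ℝ I →
      IntegrableOn (fun p => (I p) ^ 2) (Set.Icc (0:ℝ) 1 ×ˢ ω) volume →
      IntegrableOn (fun p => (fderiv ℝ I p (1, u p)) ^ 2) (Set.Icc (0:ℝ) 1 ×ˢ ω) volume →
      (∫ p in Set.Icc (0:ℝ) 1 ×ˢ ω, (I p) ^ 2 ∂volume) ≤
        C * ((∫ x in ω, (I (0, x)) ^ 2 ∂volume)
          + (∫ x in ω, (I (1, x)) ^ 2 ∂volume)
          + (∫ p in Set.Icc (0:ℝ) 1 ×ˢ ω, (fderiv ℝ I p (1, u p)) ^ 2 ∂volume)) := by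
  classical
  set L : ℝ≥0 := ⟨Real.exp K, (Real.exp_pos _).le⟩ with hLdef
  have hLcoe : (L : ℝ) = Real.exp K := rfl
  set c : ℝ≥0∞ := (L : ℝ≥0∞) ^ (d : ℝ) with hcdef
  have hc_ne_top : c ≠ ∞ :=
    (ENNReal.rpow_lt_top_of_nonneg (by positivity) ENNReal.coe_ne_top).ne
  -- Lipschitz estimates for the flow and its inverse
  have hφlip : ∀ t ∈ Set.Icc (0:ℝ) 1, LipschitzWith L (φ t) := by
    intro t ht
    refine LipschitzWith.of_dist_le_mul fun x x' => ?_
    simpa [hLcoe] using aux_lip_forward hu_lip hflow hφ0 ht x x'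
  have hψlip : ∀ t ∈ Set.Icc (0:ℝ) 1, LipschitzWith L (ψ t) := by
    intro t ht
    refine LipschitzWith.of_dist_le_mul fun y y' => ?_
    have h := aux_lip_backward hu_lip hflow hφ0 ht (ψ t y) (ψ t y')
    rw [(hbij t ht).2.2 y, (hbij t ht).2.2 y'] at h
    simpa [hLcoe] using h
  have hψmaps : ∀ t ∈ Set.Icc (0:ℝ) 1, Set.MapsTo (ψ t) ω ω := by
    intro t ht y hy
    obtain ⟨z, hz, hzy⟩ := (hbij t ht).1.2.2 hy
    rw [← hzy, (hbij t ht).2.1 z]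
    exact hz
  -- transfer estimates
  have htrans_φ : ∀ t ∈ Set.Icc (0:ℝ) 1, ∀ H : ((Fin d) → ℝ) → ℝ≥0∞, Measurable H →
      ∫⁻ z in ω, H (φ t z) ∂volume ≤ c * ∫⁻ z in ω, H z ∂volume := fun t ht H hH =>
    aux_transfer' hω (hφlip t ht).continuous.measurable (hψlip t ht)
      (hbij t ht).1.1 (hbij t ht).2.1 hH
  have htrans_ψ : ∀ t ∈ Set.Icc (0:ℝ) 1, ∀ H : ((Fin d) → ℝ) → ℝ≥0∞, Measurable H →
      ∫⁻ z in ω, H (ψ t z) ∂volume ≤ c * ∫⁻ z in ω, H z ∂volume := fun t ht H hH =>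
    aux_transfer' hω (hψlip t ht).continuous.measurable (hφlip t ht)
      (hψmaps t ht) (hbij t ht).2.2 hH
  -- globally continuous clamped flow
  set τ : ℝ → ℝ := fun s => min 1 (max 0 s) with hτdef
  have hτcont : Continuous τ := continuous_const.min (continuous_const.max continuous_id)
  have hτmem : ∀ s, τ s ∈ Set.Icc (0:ℝ) 1 :=
    fun s => ⟨le_min zero_le_one (le_max_left 0 s), min_le_left _ _⟩
  have hτeq : ∀ s ∈ Set.Icc (0:ℝ) 1, τ s = s := fun s hs => by
    rw [hτdef]; simp only [max_eq_right hs.1, min_eq_right hs.2]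
  have hφtcont : ∀ x, Continuous fun s => φ s x := fun x =>
    continuous_iff_continuousAt.2 fun s => (hflow x s).continuousAt
  set Φ : ℝ × ((Fin d) → ℝ) → ((Fin d) → ℝ) := fun q => φ (τ q.1) q.2 with hΦdef
  have hΦcont : Continuous Φ := by
    rw [continuous_iff_continuousAt]
    rintro ⟨t₀, x₀⟩
    have key : ∀ q : ℝ × ((Fin d) → ℝ), dist (Φ q) (Φ (t₀, x₀)) ≤
        Real.exp K * dist q.2 x₀ + dist (φ (τ q.1) x₀) (φ (τ t₀) x₀) := by
      intro q
      calc dist (Φ q) (Φ (t₀, x₀))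
          ≤ dist (φ (τ q.1) q.2) (φ (τ q.1) x₀) + dist (φ (τ q.1) x₀) (φ (τ t₀) x₀) :=
            dist_triangle _ _ _
        _ ≤ Real.exp K * dist q.2 x₀ + dist (φ (τ q.1) x₀) (φ (τ t₀) x₀) :=
            add_le_add_left (aux_lip_forward hu_lip hflow hφ0 (hτmem q.1) q.2 x₀) _
    have hb : Tendsto (fun q : ℝ × ((Fin d) → ℝ) =>
        Real.exp K * dist q.2 x₀ + dist (φ (τ q.1) x₀) (φ (τ t₀) x₀)) (𝓝 (t₀, x₀)) (𝓝 0) := by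
      have h1 : Continuous fun q : ℝ × ((Fin d) → ℝ) =>
          Real.exp K * dist q.2 x₀ + dist (φ (τ q.1) x₀) (φ (τ t₀) x₀) :=
        (continuous_const.mul (continuous_snd.dist continuous_const)).add
          ((((hφtcont x₀).comp (hτcont.comp continuous_fst)).dist continuous_const))
      have := h1.tendsto (t₀, x₀)
      simpa using this
    rw [ContinuousAt, tendsto_iff_dist_tendsto_zero]
    exact squeeze_zero (fun q => dist_nonneg) key hb
  refine ⟨2 * c.toReal + 2 * c.toReal ^ 2 + 1, by positivity, ?_⟩
  intro I hI hIsq hDsq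
  have hIcont : Continuous I := hI.continuous
  set D : ℝ × ((Fin d) → ℝ) → ℝ := fun p => fderiv ℝ I p (1, u p) with hDdef
  have hDmeas : Measurable D := by
    have h1 : Measurable fun p : ℝ × ((Fin d) → ℝ) =>
        ((fderiv ℝ I p : (ℝ × ((Fin d) → ℝ)) →L[ℝ] ℝ), ((1:ℝ), u p)) :=
      Measurable.prodMk (measurable_fderiv ℝ I) (continuous_const.prodMk hu_cont).measurable
    exact isBoundedBilinearMap_apply.continuous.measurable.comp h1
  have hDsq' : IntegrableOn (fun p => (D p) ^ 2) (Set.Icc (0:ℝ) 1 ×ˢ ω) volume := by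
    simp only [hDdef]; exact hDsq
  set Dc : ℝ × ((Fin d) → ℝ) → ℝ := fun q => D (q.1, Φ q) with hDcdef
  have hDcmeas : Measurable Dc := hDmeas.comp (measurable_fst.prodMk hΦcont.measurable)
  have hDceq : ∀ s ∈ Set.Icc (0:ℝ) 1, ∀ x, Dc (s, x) = D (s, φ s x) := by
    intro s hs x
    simp only [hDcdef, hΦdef]
    rw [hτeq s hs]
  have hgderiv : ∀ x s, HasDerivAt (fun s' => I (s', φ s' x)) (D (s, φ s x)) s := by
    intro x s
    have hγ : HasDerivAt (fun s' : ℝ => (s', φ s' x)) ((1 : ℝ), u (s, φ s x)) s :=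
      (hasDerivAt_id s).prodMk (hflow x s)
    have hf := (hI (s, φ s x)).hasFDerivAt
    have h2 := hf.comp_hasDerivAt s hγ
    simp only [hDdef]
    exact h2
  set Ω₀ : Set (ℝ × ((Fin d) → ℝ)) := Set.Icc (0:ℝ) 1 ×ˢ ω with hΩ₀
  have hiter : ∀ f : ℝ × ((Fin d) → ℝ) → ℝ≥0∞, Measurable f →
      ∫⁻ p in Ω₀, f p ∂volume
        = ∫⁻ t in Set.Icc (0:ℝ) 1, ∫⁻ y in ω, f (t, y) ∂volume ∂volume := by
    intro f hf
    rw [hΩ₀, Measure.volume_eq_prod, ← Measure.prod_restrict, lintegral_prod _ hf.aemeasurable]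
  set A := ∫⁻ p in Ω₀, ENNReal.ofReal ((I p) ^ 2) ∂volume with hAdef
  set AD := ∫⁻ p in Ω₀, ENNReal.ofReal ((D p) ^ 2) ∂volume with hADdef
  set B0 := ∫⁻ x in ω, ENNReal.ofReal ((I (0, x)) ^ 2) ∂volume with hB0def
  set W : ((Fin d) → ℝ) → ℝ≥0∞ :=
    fun x => ∫⁻ s in Set.Icc (0:ℝ) 1, ENNReal.ofReal ((Dc (s, x)) ^ 2) ∂volume with hWdef
  set T := ∫⁻ x in ω, W x ∂volume with hTdef
  have hIsqm : Measurable fun p : ℝ × ((Fin d) → ℝ) => ENNReal.ofReal ((I p) ^ 2) :=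
    ENNReal.measurable_ofReal.comp (hIcont.pow 2).measurable
  have hDsqm : Measurable fun p : ℝ × ((Fin d) → ℝ) => ENNReal.ofReal ((D p) ^ 2) :=
    ENNReal.measurable_ofReal.comp (hDmeas.pow_const 2)
  have hDcsqm : Measurable fun q : ℝ × ((Fin d) → ℝ) => ENNReal.ofReal ((Dc q) ^ 2) :=
    ENNReal.measurable_ofReal.comp (hDcmeas.pow_const 2)
  have hI0m : Measurable fun x : (Fin d) → ℝ => ENNReal.ofReal ((I (0, x)) ^ 2) := by
    exact ENNReal.measurable_ofReal.comp
      ((hIcont.comp (continuous_const.prodMk continuous_id)).pow 2).measurable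
  have hItm : ∀ t : ℝ, Measurable fun y : (Fin d) → ℝ => ENNReal.ofReal ((I (t, y)) ^ 2) := by
    intro t
    exact ENNReal.measurable_ofReal.comp
      ((hIcont.comp (continuous_const.prodMk continuous_id)).pow 2).measurable
  have hIφm : ∀ t ∈ Set.Icc (0:ℝ) 1,
      Measurable fun x : (Fin d) → ℝ => ENNReal.ofReal ((I (t, φ t x)) ^ 2) := by
    intro t ht
    exact ENNReal.measurable_ofReal.comp
      ((hIcont.comp (continuous_const.prodMk (hφlip t ht).continuous)).pow 2).measurable
  have hDtm : ∀ s : ℝ, Measurable fun y : (Fin d) → ℝ => ENNReal.ofReal ((D (s, y)) ^ 2) := by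
    intro s
    exact ENNReal.measurable_ofReal.comp
      ((hDmeas.comp (measurable_const.prodMk measurable_id)).pow_const 2)
  have hA_lt : A < ∞ := by
    have he : A = ∫⁻ p in Ω₀, (‖(I p) ^ 2‖₊ : ℝ≥0∞) ∂volume := by
      rw [hAdef]; exact lintegral_congr fun p => (Real.enorm_eq_ofReal (sq_nonneg _)).symm
    rw [he]
    exact hIsq.2
  have hAD_lt : AD < ∞ := by
    have he : AD = ∫⁻ p in Ω₀, (‖(D p) ^ 2‖₊ : ℝ≥0∞) ∂volume := by
      rw [hADdef]; exact lintegral_congr fun p => (Real.enorm_eq_ofReal (sq_nonneg _)).symm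
    rw [he]
    exact hDsq'.2
  have hAiter : A = ∫⁻ t in Set.Icc (0:ℝ) 1,
      ∫⁻ y in ω, ENNReal.ofReal ((I (t, y)) ^ 2) ∂volume ∂volume := hiter _ hIsqm
  have hADiter : AD = ∫⁻ s in Set.Icc (0:ℝ) 1,
      ∫⁻ y in ω, ENNReal.ofReal ((D (s, y)) ^ 2) ∂volume ∂volume := hiter _ hDsqm
  have hswap : T = ∫⁻ s in Set.Icc (0:ℝ) 1,
      ∫⁻ x in ω, ENNReal.ofReal ((Dc (s, x)) ^ 2) ∂volume ∂volume := by
    rw [hTdef]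
    simp only [hWdef]
    exact lintegral_lintegral_swap (hDcsqm.comp measurable_swap).aemeasurable
  have hT_le : T ≤ c * AD := by
    rw [hswap, hADiter]
    have hb : ∀ s ∈ Set.Icc (0:ℝ) 1,
        (∫⁻ x in ω, ENNReal.ofReal ((Dc (s, x)) ^ 2) ∂volume)
          ≤ c * ∫⁻ y in ω, ENNReal.ofReal ((D (s, y)) ^ 2) ∂volume := by
      intro s hs
      have heq : (∫⁻ x in ω, ENNReal.ofReal ((Dc (s, x)) ^ 2) ∂volume)
          = ∫⁻ x in ω, (fun y => ENNReal.ofReal ((D (s, y)) ^ 2)) (φ s x) ∂volume :=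
        lintegral_congr fun x => by
          show ENNReal.ofReal ((Dc (s, x)) ^ 2) = ENNReal.ofReal ((D (s, φ s x)) ^ 2)
          rw [hDceq s hs x]
      rw [heq]
      exact htrans_φ s hs _ (hDtm s)
    calc ∫⁻ s in Set.Icc (0:ℝ) 1,
          (∫⁻ x in ω, ENNReal.ofReal ((Dc (s, x)) ^ 2) ∂volume) ∂volume
        ≤ ∫⁻ s in Set.Icc (0:ℝ) 1,
            c * (∫⁻ y in ω, ENNReal.ofReal ((D (s, y)) ^ 2) ∂volume) ∂volume := by
          refine lintegral_mono_ae ?_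
          filter_upwards [ae_restrict_mem measurableSet_Icc] with s hs using hb s hs
      _ = c * ∫⁻ s in Set.Icc (0:ℝ) 1,
            (∫⁻ y in ω, ENNReal.ofReal ((D (s, y)) ^ 2) ∂volume) ∂volume :=
          lintegral_const_mul' c _ hc_ne_top
  have hT_lt : T < ∞ := lt_of_le_of_lt hT_le (ENNReal.mul_lt_top hc_ne_top.lt_top hAD_lt)
  have hWmeas : Measurable W := by
    rw [hWdef]
    exact Measurable.lintegral_prod_right' (hDcsqm.comp measurable_swap)
  have hgood : ∀ᵐ x ∂(volume.restrict ω),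
      IntegrableOn (fun s => (Dc (s, x)) ^ 2) (Set.Icc (0:ℝ) 1) volume := by
    have hfin := ae_lt_top hWmeas (by rw [← hTdef]; exact hT_lt.ne)
    filter_upwards [hfin] with x hx
    have hm : Measurable fun s => (Dc (s, x)) ^ 2 :=
      (hDcmeas.comp (measurable_id.prodMk measurable_const)).pow_const 2
    refine ⟨hm.aestronglyMeasurable.restrict, ?_⟩
    have heq : (∫⁻ s in Set.Icc (0:ℝ) 1, (‖(Dc (s, x)) ^ 2‖₊ : ℝ≥0∞) ∂volume) = W x := by
      simp only [hWdef]
      exact lintegral_congr fun s => Real.enorm_eq_ofReal (sq_nonneg _)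
    show (∫⁻ s, (‖(Dc (s, x)) ^ 2‖₊ : ℝ≥0∞) ∂(volume.restrict (Set.Icc (0:ℝ) 1))) < ∞
    rw [show (∫⁻ s, (‖(Dc (s, x)) ^ 2‖₊ : ℝ≥0∞) ∂(volume.restrict (Set.Icc (0:ℝ) 1)))
        = W x from heq]
    exact hx
  have hptw : ∀ᵐ x ∂(volume.restrict ω), ∀ t ∈ Set.Icc (0:ℝ) 1,
      ENNReal.ofReal ((I (t, φ t x)) ^ 2) ≤ 2 * ENNReal.ofReal ((I (0, x)) ^ 2) + 2 * W x ∧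
      ENNReal.ofReal ((I (0, x)) ^ 2) ≤ 2 * ENNReal.ofReal ((I (t, φ t x)) ^ 2) + 2 * W x := by
    filter_upwards [hgood] with x hx
    intro t ht
    have hder : ∀ s ∈ Set.Icc (0:ℝ) 1, HasDerivAt (fun s' => I (s', φ s' x)) (Dc (s, x)) s :=
      fun s hs => (hDceq s hs x) ▸ hgderiv x s
    have hm : Measurable fun s => Dc (s, x) :=
      hDcmeas.comp (measurable_id.prodMk measurable_const)
    have hftc := aux_ftc hder hm hx ht
    rw [hφ0 x] at hftc
    have hRnn : 0 ≤ ∫ s in Set.Icc (0:ℝ) 1, (Dc (s, x)) ^ 2 ∂volume :=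
      integral_nonneg fun s => sq_nonneg _
    have hWx : ENNReal.ofReal (∫ s in Set.Icc (0:ℝ) 1, (Dc (s, x)) ^ 2 ∂volume) = W x := by
      simp only [hWdef]
      exact ofReal_integral_eq_lintegral_ofReal hx (ae_of_all _ fun s => sq_nonneg _)
    constructor
    · rw [← hWx]
      exact aux_ofReal_le (sq_nonneg _) hRnn hftc.1
    · rw [← hWx]
      exact aux_ofReal_le (sq_nonneg _) hRnn hftc.2
  have hvolIcc : (volume.restrict (Set.Icc (0:ℝ) 1)) Set.univ = 1 := by
    simp [Real.volume_Icc]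
  have hchain : A ≤ 2 * c * B0 + 2 * (c * (c * AD)) := by
    have hstep : ∀ t ∈ Set.Icc (0:ℝ) 1,
        (∫⁻ y in ω, ENNReal.ofReal ((I (t, y)) ^ 2) ∂volume) ≤ c * (2 * B0 + 2 * T) := by
      intro t ht
      have h1 : (∫⁻ y in ω, ENNReal.ofReal ((I (t, y)) ^ 2) ∂volume)
          ≤ c * ∫⁻ x in ω, ENNReal.ofReal ((I (t, φ t x)) ^ 2) ∂volume := by
        have heq : (∫⁻ y in ω, ENNReal.ofReal ((I (t, y)) ^ 2) ∂volume)
            = ∫⁻ y in ω, (fun z => ENNReal.ofReal ((I (t, φ t z)) ^ 2)) (ψ t y) ∂volume :=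
          lintegral_congr fun y => by
            show ENNReal.ofReal ((I (t, y)) ^ 2)
              = ENNReal.ofReal ((I (t, φ t (ψ t y))) ^ 2)
            rw [(hbij t ht).2.2 y]
        rw [heq]
        exact htrans_ψ t ht _ (hIφm t ht)
      have h2 : (∫⁻ x in ω, ENNReal.ofReal ((I (t, φ t x)) ^ 2) ∂volume) ≤ 2 * B0 + 2 * T := by
        have hmono : (∫⁻ x in ω, ENNReal.ofReal ((I (t, φ t x)) ^ 2) ∂volume)
            ≤ ∫⁻ x in ω, (2 * ENNReal.ofReal ((I (0, x)) ^ 2) + 2 * W x) ∂volume := by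
          refine lintegral_mono_ae ?_
          filter_upwards [hptw] with x hx using (hx t ht).1
        refine hmono.trans ?_
        rw [lintegral_add_left ((hI0m).const_mul 2),
          lintegral_const_mul' 2 _ (by norm_num), lintegral_const_mul' 2 _ (by norm_num),
          ← hB0def, ← hTdef]
      calc (∫⁻ y in ω, ENNReal.ofReal ((I (t, y)) ^ 2) ∂volume)
          ≤ c * ∫⁻ x in ω, ENNReal.ofReal ((I (t, φ t x)) ^ 2) ∂volume := h1
        _ ≤ c * (2 * B0 + 2 * T) := mul_le_mul_right h2 c
    calc A = ∫⁻ t in Set.Icc (0:ℝ) 1,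
          (∫⁻ y in ω, ENNReal.ofReal ((I (t, y)) ^ 2) ∂volume) ∂volume := hAiter
      _ ≤ ∫⁻ _t in Set.Icc (0:ℝ) 1, c * (2 * B0 + 2 * T) ∂volume := by
          refine lintegral_mono_ae ?_
          filter_upwards [ae_restrict_mem measurableSet_Icc] with t ht using hstep t ht
      _ = c * (2 * B0 + 2 * T) := by rw [lintegral_const, hvolIcc, mul_one]
      _ ≤ c * (2 * B0 + 2 * (c * AD)) :=
          mul_le_mul_right (add_le_add_right (mul_le_mul_right hT_le 2) _) c
      _ = 2 * c * B0 + 2 * (c * (c * AD)) := by ring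
  have hB0_le : B0 ≤ 2 * (c * A) + 2 * T := by
    have hstep : ∀ t ∈ Set.Icc (0:ℝ) 1,
        B0 ≤ 2 * (c * (∫⁻ y in ω, ENNReal.ofReal ((I (t, y)) ^ 2) ∂volume)) + 2 * T := by
      intro t ht
      have h0 : B0 ≤ ∫⁻ x in ω, (2 * ENNReal.ofReal ((I (t, φ t x)) ^ 2) + 2 * W x) ∂volume := by
        rw [hB0def]
        refine lintegral_mono_ae ?_
        filter_upwards [hptw] with x hx using (hx t ht).2
      have h1 : (∫⁻ x in ω, ENNReal.ofReal ((I (t, φ t x)) ^ 2) ∂volume)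
          ≤ c * (∫⁻ y in ω, ENNReal.ofReal ((I (t, y)) ^ 2) ∂volume) :=
        htrans_φ t ht (fun y => ENNReal.ofReal ((I (t, y)) ^ 2)) (hItm t)
      refine h0.trans ?_
      rw [lintegral_add_left ((hIφm t ht).const_mul 2),
        lintegral_const_mul' 2 _ (by norm_num), lintegral_const_mul' 2 _ (by norm_num), ← hTdef]
      exact add_le_add_left (mul_le_mul_right h1 2) _
    have hB0c : B0 = ∫⁻ _t in Set.Icc (0:ℝ) 1, B0 ∂volume := by
      rw [lintegral_const, hvolIcc, mul_one]
    rw [hB0c]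
    calc ∫⁻ _t in Set.Icc (0:ℝ) 1, B0 ∂volume
        ≤ ∫⁻ t in Set.Icc (0:ℝ) 1,
            (2 * (c * (∫⁻ y in ω, ENNReal.ofReal ((I (t, y)) ^ 2) ∂volume)) + 2 * T) ∂volume := by
          refine lintegral_mono_ae ?_
          filter_upwards [ae_restrict_mem measurableSet_Icc] with t ht using hstep t ht
      _ = 2 * (c * A) + 2 * T := by
          have hFm : Measurable fun t =>
              (∫⁻ y in ω, ENNReal.ofReal ((I (t, y)) ^ 2) ∂volume) :=
            Measurable.lintegral_prod_right' hIsqm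
          rw [lintegral_add_left ((hFm.const_mul c).const_mul 2),
            lintegral_const_mul' 2 _ (by norm_num), lintegral_const_mul' c _ hc_ne_top,
            lintegral_const, hvolIcc, mul_one, ← hAiter]
  have h2ne : (2 : ℝ≥0∞) ≠ ∞ := by norm_num
  have hB0_lt : B0 < ∞ := by
    refine lt_of_le_of_lt hB0_le ?_
    exact ENNReal.add_lt_top.2 ⟨ENNReal.mul_lt_top h2ne.lt_top
      (ENNReal.mul_lt_top hc_ne_top.lt_top hA_lt),
      ENNReal.mul_lt_top h2ne.lt_top hT_lt⟩
  -- back to real integrals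
  have hAreal : (∫ p in Ω₀, (I p) ^ 2 ∂volume) = A.toReal := by
    have hsm : AEStronglyMeasurable (fun p : ℝ × ((Fin d) → ℝ) => (I p) ^ 2)
        (volume.restrict Ω₀) := by
      exact (hIcont.pow 2).aestronglyMeasurable.restrict
    rw [integral_eq_lintegral_of_nonneg_ae (ae_of_all _ fun p => sq_nonneg _) hsm, hAdef]
  have hB0real : (∫ x in ω, (I (0, x)) ^ 2 ∂volume) = B0.toReal := by
    have hsm : AEStronglyMeasurable (fun x : (Fin d) → ℝ => (I (0, x)) ^ 2)
        (volume.restrict ω) := by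
      exact ((hIcont.comp (continuous_const.prodMk continuous_id)).pow 2).aestronglyMeasurable.restrict
    rw [integral_eq_lintegral_of_nonneg_ae (ae_of_all _ fun x => sq_nonneg _) hsm, hB0def]
  have hADreal : (∫ p in Ω₀, (fderiv ℝ I p (1, u p)) ^ 2 ∂volume) = AD.toReal := by
    have he : (fun p : ℝ × ((Fin d) → ℝ) => (fderiv ℝ I p (1, u p)) ^ 2)
        = fun p => (D p) ^ 2 := by
      funext p; rw [hDdef]
    have hsm : AEStronglyMeasurable (fun p : ℝ × ((Fin d) → ℝ) => (D p) ^ 2)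
        (volume.restrict Ω₀) := by
      exact (hDmeas.pow_const 2).aestronglyMeasurable.restrict
    rw [he, integral_eq_lintegral_of_nonneg_ae (ae_of_all _ fun p => sq_nonneg _) hsm, hADdef]
  have hB1 : 0 ≤ ∫ x in ω, (I (1, x)) ^ 2 ∂volume := integral_nonneg fun x => sq_nonneg _
  have hrhs_ne : 2 * c * B0 + 2 * (c * (c * AD)) ≠ ∞ :=
    (ENNReal.add_lt_top.2 ⟨ENNReal.mul_lt_top (ENNReal.mul_lt_top h2ne.lt_top hc_ne_top.lt_top)
        hB0_lt, ENNReal.mul_lt_top h2ne.lt_top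
        (ENNReal.mul_lt_top hc_ne_top.lt_top (ENNReal.mul_lt_top hc_ne_top.lt_top hAD_lt))⟩).ne
  have hmain := ENNReal.toReal_mono hrhs_ne hchain
  have e1 : (2 * c * B0 + 2 * (c * (c * AD))).toReal
      = 2 * c.toReal * B0.toReal + 2 * (c.toReal * (c.toReal * AD.toReal)) := by
    rw [ENNReal.toReal_add (ENNReal.mul_ne_top (ENNReal.mul_ne_top h2ne hc_ne_top) hB0_lt.ne)
        (ENNReal.mul_ne_top h2ne (ENNReal.mul_ne_top hc_ne_top
          (ENNReal.mul_ne_top hc_ne_top hAD_lt.ne))),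
      ENNReal.toReal_mul, ENNReal.toReal_mul, ENNReal.toReal_mul, ENNReal.toReal_mul,
      ENNReal.toReal_mul]
    norm_num
  rw [e1] at hmain
  rw [hAreal, hB0real, hADreal]
  have ha : 0 ≤ c.toReal := ENNReal.toReal_nonneg
  have hb0 : 0 ≤ B0.toReal := ENNReal.toReal_nonneg
  have had : 0 ≤ AD.toReal := ENNReal.toReal_nonneg
  nlinarith [hmain, mul_nonneg ha hb0, mul_nonneg ha had, mul_nonneg (mul_nonneg ha ha) had,
    mul_nonneg (mul_nonneg ha ha) hb0, mul_nonneg ha hB1, mul_nonneg (mul_nonneg ha ha) hB1,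
    hB1, ha, hb0, had]
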